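/- Let α > 0, let Y be a finite set of real numbers (the source points), let S : ℝ → ℝ be a weight function, and let c ∈ ℝ (the source-box center). For each n ∈ ℕ define A_n := Σ_{y ∈ Y} S(y) · (1/n!) · ((y − c)/√α)ⁿ. Then for every x ∈ ℝ, the series with n-th term A_n · h_n((x − c)/√α) converges and its sum equals Σ_{y ∈ Y} S(y) · exp(−((y − x)/√α)²). (This is the Multipole-to-Multipole (M2M) aggregation formula of the Fast Gauss Transform: the contribution of all sources in a box is identified with a single Hermite expansion about the box center.) -/

import Mathlib

open Real

/-- The Hermite function `h_n(t) = (−1)ⁿ · (dⁿ/dtⁿ) exp(−t²)`. -/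
noncomputable def hermiteFun (n : ℕ) (t : ℝ) : ℝ :=
  (-1) ^ n * iteratedDeriv n (fun s : ℝ => Real.exp (-s ^ 2)) t

lemma gaussComplex_contDiff : ContDiff ℂ ⊤ (fun z : ℂ => Complex.exp (-z ^ 2)) :=
  Complex.contDiff_exp.comp ((contDiff_id.pow 2).neg)

lemma gaussReal_contDiff : ContDiff ℝ ⊤ (fun s : ℝ => Real.exp (-s ^ 2)) :=
  Real.contDiff_exp.comp ((contDiff_id.pow 2).neg)

lemma iteratedDeriv_gauss_ofReal (n : ℕ) (t : ℝ) :
    iteratedDeriv n (fun z : ℂ => Complex.exp (-z ^ 2)) (t : ℂ)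
      = ((iteratedDeriv n (fun s : ℝ => Real.exp (-s ^ 2)) t : ℝ) : ℂ) := by
  induction n generalizing t with
  | zero => simp [Complex.ofReal_exp]
  | succ n ih =>
    rw [iteratedDeriv_succ, iteratedDeriv_succ]
    have hFd : DifferentiableAt ℂ (iteratedDeriv n (fun z : ℂ => Complex.exp (-z ^ 2))) (t : ℂ) :=
      (gaussComplex_contDiff.differentiable_iteratedDeriv n
        (by exact_mod_cast lt_top_iff_ne_top.2 (by simp))).differentiableAt
    have hfd : HasDerivAt (iteratedDeriv n (fun s : ℝ => Real.exp (-s ^ 2)))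
        (deriv (iteratedDeriv n (fun s : ℝ => Real.exp (-s ^ 2))) t) t :=
      ((gaussReal_contDiff.differentiable_iteratedDeriv n
        (by exact_mod_cast lt_top_iff_ne_top.2 (by simp))).differentiableAt).hasDerivAt
    -- restriction of the complex derivative to ℝ
    have h1 : HasDerivAt (fun s : ℝ => iteratedDeriv n (fun z : ℂ => Complex.exp (-z ^ 2)) (s : ℂ))
        (deriv (iteratedDeriv n (fun z : ℂ => Complex.exp (-z ^ 2))) (t : ℂ)) t :=
      hFd.hasDerivAt.comp_ofReal
    have h2 : HasDerivAt (fun s : ℝ => iteratedDeriv n (fun z : ℂ => Complex.exp (-z ^ 2)) (s : ℂ))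
        ((deriv (iteratedDeriv n (fun s : ℝ => Real.exp (-s ^ 2))) t : ℝ) : ℂ) t := by
      have := hfd.ofReal_comp
      simpa only [← ih] using this
    rw [h1.unique h2]

/-- Generating function / Taylor expansion: `exp(-(t-s)²) = Σ sⁿ/n! · h_n(t)`. -/
lemma hasSum_hermiteFun (s t : ℝ) :
    HasSum (fun n : ℕ => s ^ n / (n.factorial : ℝ) * hermiteFun n t)
      (Real.exp (-(t - s) ^ 2)) := by
  have hF : Differentiable ℂ (fun z : ℂ => Complex.exp (-((t : ℂ) - z) ^ 2)) := by
    apply Complex.differentiable_exp.comp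
    exact (((differentiable_const _).sub differentiable_id).pow 2).neg
  have h := Complex.hasSum_taylorSeries_of_entire hF 0 (s : ℂ)
  rw [← Complex.hasSum_ofReal]
  convert h using 2 with n
  · rfl
  · -- term equality
    have hc : (fun z : ℂ => Complex.exp (-((t : ℂ) - z) ^ 2))
        = fun z : ℂ => Complex.exp (-((t : ℂ) + -z) ^ 2) := by
      funext z; ring_nf
    have hD : iteratedDeriv n (fun z : ℂ => Complex.exp (-((t : ℂ) - z) ^ 2)) 0
        = (-1 : ℂ) ^ n • iteratedDeriv n (fun w : ℂ => Complex.exp (-((t : ℂ) + w) ^ 2)) (-0) := by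
      rw [hc]; exact iteratedDeriv_comp_neg n (fun w : ℂ => Complex.exp (-((t : ℂ) + w) ^ 2)) 0
    rw [hD, neg_zero]
    have hca : iteratedDeriv n (fun w : ℂ => Complex.exp (-((t : ℂ) + w) ^ 2)) 0
        = iteratedDeriv n (fun z : ℂ => Complex.exp (-z ^ 2)) ((t : ℂ) + 0) := by
      exact congrFun (iteratedDeriv_comp_const_add n (fun z : ℂ => Complex.exp (-z ^ 2)) (t : ℂ)) 0
    rw [hca, add_zero, iteratedDeriv_gauss_ofReal, hermiteFun]
    push_cast
    field_simp
    simp only [smul_eq_mul, sub_zero]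
    ring
  · -- value equality
    rw [show (-((t : ℂ) - (s : ℂ)) ^ 2) = (((-(t - s) ^ 2 : ℝ)) : ℂ) by push_cast; ring]
    exact Complex.ofReal_exp _

/-- **M2M aggregation formula of the Fast Gauss Transform.**
With `A_n := Σ_{y ∈ Y} S(y)·(1/n!)·((y−c)/√α)ⁿ`, for every `x` the series with `n`-th
term `A_n·h_n((x−c)/√α)` converges with sum `Σ_{y ∈ Y} S(y)·exp(−((y−x)/√α)²)`. -/
theorem fgt_m2m_aggregation (α : ℝ) (hα : 0 < α)
    (Y : Finset ℝ) (S : ℝ → ℝ) (c : ℝ) (A : ℕ → ℝ)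
    (hA : ∀ n, A n = ∑ y ∈ Y, S y * (1 / (n.factorial : ℝ)) * ((y - c) / Real.sqrt α) ^ n) :
    ∀ x : ℝ,
      HasSum (fun n : ℕ => A n * hermiteFun n ((x - c) / Real.sqrt α))
        (∑ y ∈ Y, S y * Real.exp (-((y - x) / Real.sqrt α) ^ 2)) := by
  intro x
  set t : ℝ := (x - c) / Real.sqrt α with ht
  have key : ∀ y ∈ Y, HasSum
      (fun n : ℕ => S y * (((y - c) / Real.sqrt α) ^ n / (n.factorial : ℝ) * hermiteFun n t))
      (S y * Real.exp (-((y - x) / Real.sqrt α) ^ 2)) := by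
    intro y _
    have h := (hasSum_hermiteFun ((y - c) / Real.sqrt α) t).mul_left (S y)
    have harg : -(t - (y - c) / Real.sqrt α) ^ 2 = -((y - x) / Real.sqrt α) ^ 2 := by
      rw [ht]; ring
    rwa [harg] at h
  have := hasSum_sum key
  convert this using 2 with n
  rw [hA n, Finset.sum_mul]
  refine Finset.sum_congr rfl fun y _ => ?_
  ring
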